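/- For every point x of a topological space X, the singleton {x} is quasi e*-θ-closed, i.e., whenever {x} ⊆ U with U e*-θ-open, we have e*-cl_θ({x}) ⊆ U. -/
import Mathlib


open Set Topology

variable {X : Type*} [TopologicalSpace X]

/-- δ-closure of A. -/
def deltaCl (A : Set X) : Set X :=
  {x | ∀ U : Set X, IsOpen U → x ∈ U → (interior (closure U) ∩ A).Nonempty}

/-- A is e*-open if A ⊆ cl(int(δ-cl A)). -/
def EStarOpen (A : Set X) : Prop := A ⊆ closure (interior (deltaCl A))

/-- A is e*-closed if its complement is e*-open. -/
def EStarClosed (A : Set X) : Prop := EStarOpen Aᶜ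

/-- e*-closure: intersection of all e*-closed supersets. -/
def eStarCl (A : Set X) : Set X := ⋂₀ {F | EStarClosed F ∧ A ⊆ F}

/-- e*-interior: union of all e*-open subsets. -/
def eStarInt (A : Set X) : Set X := ⋃₀ {U | EStarOpen U ∧ U ⊆ A}

/-- e*-regular: both e*-open and e*-closed. -/
def EStarRegular (A : Set X) : Prop := EStarOpen A ∧ EStarClosed A

/-- e*-θ-closure. -/
def eStarClTheta (A : Set X) : Set X :=
  {x | ∀ U : Set X, EStarOpen U → x ∈ U → (eStarCl U ∩ A).Nonempty}

/-- e*-θ-closed. -/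
def EStarThetaClosed (A : Set X) : Prop := A = eStarClTheta A

/-- e*-θ-open. -/
def EStarThetaOpen (A : Set X) : Prop := EStarThetaClosed Aᶜ

/-- quasi e*-θ-closed. -/
def QEStarThetaClosed (A : Set X) : Prop :=
  ∀ U : Set X, EStarThetaOpen U → A ⊆ U → eStarClTheta A ⊆ U

/-- e*-θ-kernel. -/
def eStarKerTheta (A : Set X) : Set X := ⋂₀ {U | EStarThetaOpen U ∧ A ⊆ U}


lemma deltaCl_mono {A B : Set X} (h : A ⊆ B) : deltaCl A ⊆ deltaCl B := by
  intro z hz U hU hzU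
  obtain ⟨w, hw1, hw2⟩ := hz U hU hzU
  exact ⟨w, hw1, h hw2⟩

lemma eStarOpen_sUnion {S : Set (Set X)} (h : ∀ A ∈ S, EStarOpen A) :
    EStarOpen (⋃₀ S) := by
  intro z hz
  obtain ⟨A, hA, hzA⟩ := hz
  exact closure_mono (interior_mono (deltaCl_mono (subset_sUnion_of_mem hA))) (h A hA hzA)

lemma subset_eStarCl (A : Set X) : A ⊆ eStarCl A := by
  intro z hz F hF
  exact hF.2 hz

lemma eStarClosed_eStarCl (A : Set X) : EStarClosed (eStarCl A) := by
  have : (eStarCl A)ᶜ = ⋃₀ {U | EStarOpen U ∧ ∃ F, EStarClosed F ∧ A ⊆ F ∧ U = Fᶜ} := by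
    ext z
    simp only [mem_compl_iff, eStarCl, mem_sInter, mem_setOf_eq, not_forall, mem_sUnion]
    constructor
    · rintro ⟨F, ⟨hF, hAF⟩, hz⟩
      exact ⟨Fᶜ, ⟨by simpa [EStarClosed] using hF, F, hF, hAF, rfl⟩, hz⟩
    · rintro ⟨U, ⟨hU, F, hF, hAF, rfl⟩, hz⟩
      exact ⟨F, ⟨hF, hAF⟩, hz⟩
  unfold EStarClosed
  rw [this]
  exact eStarOpen_sUnion (fun A hA => hA.1)

theorem stmt15 (x : X) : QEStarThetaClosed ({x} : Set X) := by
  intro U hU hxU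
  have hx : x ∈ U := hxU rfl
  -- x ∉ eStarClTheta Uᶜ
  have hnx : x ∉ eStarClTheta (Uᶜ) := by
    rw [← hU]
    simpa using hx
  simp only [eStarClTheta, mem_setOf_eq, not_forall] at hnx
  obtain ⟨V, hV, hxV, hne⟩ := hnx
  rw [Set.not_nonempty_iff_eq_empty] at hne
  have hVU : eStarCl V ⊆ U := by
    intro z hz
    by_contra hzU
    exact absurd hne (Set.nonempty_iff_ne_empty.mp ⟨z, hz, hzU⟩)
  intro y hy
  by_contra hyU
  have hyW : y ∈ (eStarCl V)ᶜ := fun h => hyU (hVU h)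
  have hWopen : EStarOpen ((eStarCl V)ᶜ) := eStarClosed_eStarCl V
  obtain ⟨w, hw1, hw2⟩ := hy _ hWopen hyW
  rw [Set.mem_singleton_iff] at hw2
  -- w = x ∈ eStarCl ((eStarCl V)ᶜ) ⊆ Vᶜ, contradiction
  have : w ∈ Vᶜ := hw1 (Vᶜ) ⟨by simpa [EStarClosed] using hV,
    fun z hz => fun hzV => hz (subset_eStarCl V hzV)⟩
  exact this (hw2 ▸ hxV)
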